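/- arXiv:0810.3629 — 2 statements merged into one kernel-verified Lean document; each statement's English description precedes it below -/
import Mathlib

section
/- The smallest norm-closed subalgebra of the bounded operators on ℓ²(ℕ, ℂ) that contains both T and T* contains every compact operator on ℓ²(ℕ, ℂ). -/
noncomputable section

open ContinuousLinearMap

/-- The standard orthonormal basis vectors of `ℓ²(ℕ, ℂ)`. -/
def fockBasis (n : ℕ) : lp (fun _ : ℕ => ℂ) 2 := lp.single 2 n 1

namespace FockAux

abbrev H : Type := lp (fun _ : ℕ => ℂ) 2

local notation "⟪" x ", " y "⟫" => @inner ℂ _ _ x y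

lemma fock_apply (n j : ℕ) : (fockBasis n : ∀ _ : ℕ, ℂ) j = if j = n then 1 else 0 := by
  rcases eq_or_ne j n with h | h
  · subst h; simp [fockBasis, lp.single_apply_self]
  · simp [fockBasis, lp.single_apply_ne _ _ _ h, h]

lemma inner_fock_left (n : ℕ) (x : H) : ⟪fockBasis n, x⟫ = x n := by
  rw [fockBasis, lp.inner_single_left]; simp [RCLike.inner_apply]

lemma inner_fock_right (n : ℕ) (x : H) : ⟪x, fockBasis n⟫ = starRingEnd ℂ (x n) := by
  rw [← inner_conj_symm, inner_fock_left]

lemma inner_fock_fock (m n : ℕ) : ⟪fockBasis m, fockBasis n⟫ = if m = n then 1 else 0 := by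
  rw [inner_fock_left, fock_apply]

lemma smul_fock (n : ℕ) (c : ℂ) : c • fockBasis n = lp.single 2 n c := by
  apply lp.ext; funext j
  rcases eq_or_ne j n with h | h
  · subst h; simp [fockBasis, lp.single_apply_self]
  · simp [fockBasis, lp.single_apply_ne _ _ _ h, Pi.single_apply, h]

lemma hasSum_coord (x : H) : HasSum (fun n => (x n : ℂ) • fockBasis n) x := by
  simp_rw [smul_fock]
  exact lp.hasSum_single ENNReal.ofNat_ne_top x

lemma norm_fock (n : ℕ) : ‖fockBasis n‖ = 1 := by
  have : ‖lp.single (E := fun _ : ℕ => ℂ) 2 n ((fun _ => (1 : ℂ)) n)‖ = ‖(1 : ℂ)‖ :=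
    lp.norm_single (E := fun _ : ℕ => ℂ) (by norm_num) n _
  simpa [fockBasis] using this

lemma norm_sq_eq (x : H) : ‖x‖ ^ 2 = ∑' n, ‖x n‖ ^ 2 := by
  have h := lp.norm_rpow_eq_tsum (p := 2) (by norm_num) x
  simp only [ENNReal.toReal_ofNat] at h
  calc ‖x‖ ^ 2 = ‖x‖ ^ (2 : ℝ) := by rw [← Real.rpow_natCast ‖x‖ 2]; norm_num
    _ = ∑' n, ‖x n‖ ^ (2 : ℝ) := h
    _ = ∑' n, ‖x n‖ ^ 2 := by
        congr 1; funext n; rw [← Real.rpow_natCast ‖x n‖ 2]; norm_num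

lemma summable_sq (x : H) : Summable fun n => ‖x n‖ ^ 2 := by
  have h := (lp.memℓp x).summable (p := 2) (by norm_num)
  simp only [ENNReal.toReal_ofNat] at h
  refine h.congr fun n => ?_
  rw [← Real.rpow_natCast ‖x n‖ 2]; norm_num

/-- coordinates of a diagonal operator -/
lemma diag_coord (A : H →L[ℂ] H) (d : ℕ → ℂ)
    (h : ∀ n, A (fockBasis n) = d n • fockBasis n) (x : H) (j : ℕ) :
    (A x : ∀ _ : ℕ, ℂ) j = d j * x j := by
  have hs3 : HasSum (fun n => ((x n * d n : ℂ)) • fockBasis n) (A x) := by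
    have hs2 : HasSum (fun n => A ((x n : ℂ) • fockBasis n)) (A x) :=
      (hasSum_coord x).mapL A
    refine hs2.congr_fun fun n => ?_
    rw [map_smul, h n, smul_smul]
  have hs4 : HasSum (fun n => ⟪fockBasis j, (x n * d n : ℂ) • fockBasis n⟫)
      ⟪fockBasis j, A x⟫ := hs3.mapL (innerSL ℂ (fockBasis j))
  have hterm : ∀ n, ⟪fockBasis j, (x n * d n : ℂ) • fockBasis n⟫
      = if n = j then x j * d j else 0 := by
    intro n
    rw [inner_smul_right, inner_fock_fock]
    rcases eq_or_ne n j with h' | h'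
    · subst h'; simp
    · simp [h', Ne.symm h']
  have h5 : HasSum (fun n => if n = j then x j * d j else 0) ⟪fockBasis j, A x⟫ :=
    hs4.congr_fun fun n => (hterm n).symm
  have h6 := (hasSum_ite_eq j (x j * d j)).unique h5
  rw [← inner_fock_left j (A x), ← h6, mul_comm]

/-- norm bound for diagonal operators -/
lemma diag_norm_le (A : H →L[ℂ] H) (d : ℕ → ℂ)
    (h : ∀ n, A (fockBasis n) = d n • fockBasis n)
    {C : ℝ} (hC : 0 ≤ C) (hd : ∀ n, ‖d n‖ ≤ C) : ‖A‖ ≤ C := by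
  refine A.opNorm_le_bound hC fun x => ?_
  have h1 : ‖A x‖ ^ 2 ≤ (C * ‖x‖) ^ 2 := by
    rw [norm_sq_eq, mul_pow]
    have hle : ∀ n, ‖(A x : ∀ _ : ℕ, ℂ) n‖ ^ 2 ≤ C ^ 2 * ‖x n‖ ^ 2 := by
      intro n
      rw [diag_coord A d h x n, norm_mul, mul_pow]
      exact mul_le_mul_of_nonneg_right (pow_le_pow_left₀ (norm_nonneg _) (hd n) 2)
        (by positivity)
    calc (∑' n, ‖(A x : ∀ _ : ℕ, ℂ) n‖ ^ 2) ≤ ∑' n, C ^ 2 * ‖x n‖ ^ 2 :=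
          Summable.tsum_le_tsum hle (summable_sq (A x)) ((summable_sq x).mul_left _)
      _ = C ^ 2 * ‖x‖ ^ 2 := by rw [tsum_mul_left, norm_sq_eq]
  exact le_of_pow_le_pow_left₀ two_ne_zero (by positivity) h1

/-- matrix units -/
def unit (m n : ℕ) : H →L[ℂ] H := (innerSL ℂ (fockBasis n)).smulRight (fockBasis m)

lemma unit_apply (m n : ℕ) (x : H) : unit m n x = ⟪fockBasis n, x⟫ • fockBasis m := rfl

lemma unit_fock (m n j : ℕ) :
    unit m n (fockBasis j) = (if j = n then (1 : ℂ) else 0) • fockBasis m := by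
  rw [unit_apply, inner_fock_fock]
  simp only [eq_comm]

end FockAux

namespace FockAux2
open FockAux

local notation "⟪" x ", " y "⟫" => @inner ℂ _ _ x y

def QN (N : ℕ) : H →L[ℂ] H := ∑ n ∈ Finset.range N, unit n n

lemma QN_apply (N : ℕ) (x : H) :
    QN N x = ∑ n ∈ Finset.range N, (x n : ℂ) • fockBasis n := by
  simp [QN, ContinuousLinearMap.sum_apply, unit_apply, inner_fock_left]

lemma QN_fock (N n : ℕ) :
    QN N (fockBasis n) = (if n < N then (1 : ℂ) else 0) • fockBasis n := by
  rw [QN_apply]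
  have h1 : ∀ j ∈ Finset.range N, ((fockBasis n : ∀ _ : ℕ, ℂ) j) • fockBasis j
      = if j = n then fockBasis n else 0 := by
    intro j _
    rw [fock_apply]
    rcases eq_or_ne j n with h | h
    · subst h; simp
    · simp [h]
  rw [Finset.sum_congr rfl h1, Finset.sum_ite_eq' (Finset.range N) n (fun _ => fockBasis n)]
  by_cases h : n < N <;> simp [h]

lemma QN_norm (N : ℕ) : ‖QN N‖ ≤ 1 :=
  diag_norm_le _ (fun n => if n < N then (1 : ℂ) else 0) (QN_fock N) zero_le_one
    (fun n => by split <;> simp)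

lemma QN_tendsto (x : H) : Filter.Tendsto (fun N => QN N x) Filter.atTop (nhds x) := by
  have h := (hasSum_coord x).tendsto_sum_nat
  simpa only [QN_apply] using h

lemma QN_sa (N : ℕ) (v x : H) : ⟪QN N v, x⟫ = ⟪v, QN N x⟫ := by
  simp only [QN_apply, sum_inner, inner_sum, inner_smul_left, inner_smul_right,
    inner_fock_left, inner_fock_right]
  exact Finset.sum_congr rfl fun n _ => mul_comm _ _

lemma unit_K_unit (K : H →L[ℂ] H) (m n : ℕ) :
    unit m m * K * unit n n = ⟪fockBasis m, K (fockBasis n)⟫ • unit m n := by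
  ext x : 1
  simp only [ContinuousLinearMap.mul_apply, ContinuousLinearMap.smul_apply, unit_apply, map_smul, inner_smul_right, smul_smul,
    inner_fock_fock]
  ring_nf

lemma col_tail (K : H →L[ℂ] H) (m N : ℕ) :
    unit m m * K - (unit m m * K) * QN N
      = (innerSL ℂ (ContinuousLinearMap.adjoint K (fockBasis m)
          - QN N (ContinuousLinearMap.adjoint K (fockBasis m)))).smulRight (fockBasis m) := by
  refine ContinuousLinearMap.ext fun x => ?_
  simp only [ContinuousLinearMap.sub_apply, ContinuousLinearMap.mul_apply, ContinuousLinearMap.smulRight_apply]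
  rw [unit_apply, unit_apply, ← sub_smul]
  congr 1
  have hw : ∀ z : H, ⟪fockBasis m, K z⟫
      = ⟪ContinuousLinearMap.adjoint K (fockBasis m), z⟫ := fun z =>
    (ContinuousLinearMap.adjoint_inner_left K z (fockBasis m)).symm
  rw [innerSL_apply_apply, hw, hw, inner_sub_left, ← QN_sa]

lemma col_tail_norm (K : H →L[ℂ] H) (m N : ℕ) :
    ‖unit m m * K - (unit m m * K) * QN N‖
      ≤ ‖ContinuousLinearMap.adjoint K (fockBasis m)
          - QN N (ContinuousLinearMap.adjoint K (fockBasis m))‖ := by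
  rw [col_tail]
  calc ‖_‖ = ‖innerSL ℂ _‖ * ‖fockBasis m‖ := ContinuousLinearMap.norm_smulRight_apply _ _
    _ ≤ _ := by rw [norm_fock, mul_one, innerSL_apply_norm]

end FockAux2

open FockAux FockAux2 Filter

local notation "⟪" x ", " y "⟫" => @inner ℂ _ _ x y

set_option maxHeartbeats 2000000 in
theorem fock_algebra_contains_compacts (q : ℝ) (hq0 : 0 < q) (hq1 : q < 1)
    (T : lp (fun _ : ℕ => ℂ) 2 →L[ℂ] lp (fun _ : ℕ => ℂ) 2)
    (hT : ∀ n : ℕ, T (fockBasis n) =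
      (Real.sqrt (1 - q ^ (2 * (n + 1))) : ℂ) • fockBasis (n + 1)) :
    ∀ K : lp (fun _ : ℕ => ℂ) 2 →L[ℂ] lp (fun _ : ℕ => ℂ) 2, IsCompactOperator (⇑K) →
      K ∈ (NonUnitalAlgebra.adjoin ℂ
        ({T, ContinuousLinearMap.adjoint T} :
          Set (lp (fun _ : ℕ => ℂ) 2 →L[ℂ] lp (fun _ : ℕ => ℂ) 2))).topologicalClosure := by
  intro K hK
  set Tc := ContinuousLinearMap.adjoint T with hTcdef
  set A0 := NonUnitalAlgebra.adjoin ℂ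
      ({T, Tc} : Set (H →L[ℂ] H)) with hA0
  set Ab := A0.topologicalClosure with hAb
  show K ∈ Ab
  have hclosed : closure (Ab : Set (H →L[ℂ] H)) = (Ab : Set (H →L[ℂ] H)) := by
    rw [show (Ab : Set (H →L[ℂ] H)) = closure (A0 : Set (H →L[ℂ] H)) from rfl, closure_closure]
  have hlim : ∀ (f : ℕ → (H →L[ℂ] H)) (a : H →L[ℂ] H),
      (∀ k, f k ∈ Ab) → Tendsto f atTop (nhds a) → a ∈ Ab := by
    intro f a hf hfa
    have := mem_closure_of_tendsto hfa (Eventually.of_forall fun k => (hf k : f k ∈ (Ab : Set _)))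
    rwa [hclosed] at this
  -- basic positivity facts
  have hqpow : ∀ m : ℕ, 0 < m → q ^ m < 1 := fun m hm => pow_lt_one₀ hq0.le hq1 hm.ne'
  have hpos : ∀ n : ℕ, 0 < 1 - q ^ (2 * (n + 1)) := fun n => by
    have := hqpow (2 * (n + 1)) (by omega); linarith
  set c : ℕ → ℝ := fun n => Real.sqrt (1 - q ^ (2 * (n + 1))) with hc
  have hc_pos : ∀ n, 0 < c n := fun n => Real.sqrt_pos.2 (hpos n)
  have hc_sq : ∀ n, (c n) ^ 2 = 1 - q ^ (2 * (n + 1)) := fun n => Real.sq_sqrt (hpos n).le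
  have h1q : (0 : ℝ) < 1 - q ^ 2 := by have := hqpow 2 (by omega); linarith
  have hT' : ∀ n, T (fockBasis n) = ((c n : ℝ) : ℂ) • fockBasis (n + 1) := fun n => hT n
  -- membership of generators
  have hT_mem : T ∈ Ab := A0.le_topologicalClosure
    (NonUnitalAlgebra.subset_adjoin ℂ (Set.mem_insert _ _))
  have hTc_mem : Tc ∈ Ab := A0.le_topologicalClosure
    (NonUnitalAlgebra.subset_adjoin ℂ (Set.mem_insert_of_mem _ rfl))
  -- adjoint on basis
  have hTsc : ∀ m j, (Tc (fockBasis m) : ∀ _ : ℕ, ℂ) j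
      = ((c j : ℝ) : ℂ) * (fockBasis m : ∀ _ : ℕ, ℂ) (j + 1) := by
    intro m j
    rw [← inner_fock_left]
    have h1 : ⟪fockBasis j, Tc (fockBasis m)⟫ = ⟪T (fockBasis j), fockBasis m⟫ :=
      ContinuousLinearMap.adjoint_inner_right T (fockBasis j) (fockBasis m)
    rw [h1, hT' j, inner_smul_left, Complex.conj_ofReal, inner_fock_left]
  have hTs0 : Tc (fockBasis 0) = 0 := by
    apply lp.ext; funext j
    rw [hTsc 0 j, fock_apply]
    simp
  have hTsS : ∀ n, Tc (fockBasis (n + 1)) = ((c n : ℝ) : ℂ) • fockBasis n := by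
    intro n
    apply lp.ext; funext j
    rw [hTsc (n + 1) j, fock_apply, lp.coeFn_smul, Pi.smul_apply, fock_apply, smul_eq_mul]
    rcases eq_or_ne j n with h | h
    · subst h; simp
    · simp [h, fun hh => h (Nat.succ_injective hh)]
  -- the diagonal operator S
  set S : H →L[ℂ] H := (((1 - q ^ 2 : ℝ) : ℂ))⁻¹ • (Tc * T - T * Tc) with hSdef
  have hS_mem : S ∈ Ab := SMulMemClass.smul_mem _
    (sub_mem (mul_mem hTc_mem hT_mem) (mul_mem hT_mem hTc_mem))
  have hS : ∀ n, S (fockBasis n) = ((q ^ (2 * n) : ℝ) : ℂ) • fockBasis n := by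
    intro n
    have hD0 : (Tc * T - T * Tc) (fockBasis n)
        = ((q ^ (2 * n) * (1 - q ^ 2) : ℝ) : ℂ) • fockBasis n := by
      cases n with
      | zero =>
        simp only [ContinuousLinearMap.sub_apply, ContinuousLinearMap.mul_apply]
        rw [hT' 0, map_smul, hTsS 0, hTs0, map_zero, sub_zero, smul_smul,
          ← Complex.ofReal_mul]
        congr 1
        rw [Complex.ofReal_inj]
        have h0 := hc_sq 0
        norm_num at h0 ⊢
        nlinarith [h0]
      | succ m =>
        simp only [ContinuousLinearMap.sub_apply, ContinuousLinearMap.mul_apply]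
        rw [hT' (m + 1), map_smul, hTsS (m + 1), hTsS m, map_smul, hT' m, smul_smul, smul_smul,
          ← sub_smul, ← Complex.ofReal_mul, ← Complex.ofReal_mul, ← Complex.ofReal_sub]
        congr 1
        rw [Complex.ofReal_inj]
        have h1 := hc_sq (m + 1)
        have h2 := hc_sq m
        have e1 : q ^ (2 * (m + 1 + 1)) = q ^ (2 * (m + 1)) * q ^ 2 := by
          rw [← pow_add]; ring_nf
        nlinarith [h1, h2, e1]
    rw [hSdef, ContinuousLinearMap.smul_apply, hD0, smul_smul]
    congr 1
    rw [← Complex.ofReal_inv, ← Complex.ofReal_mul, Complex.ofReal_inj]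
    field_simp
  have hSpow : ∀ k n, (S ^ k) (fockBasis n) = ((q ^ (2 * n * k) : ℝ) : ℂ) • fockBasis n := by
    intro k
    induction k with
    | zero => intro n; simp
    | succ k ih =>
      intro n
      rw [pow_succ, ContinuousLinearMap.mul_apply, hS n, map_smul, ih n, smul_smul]
      congr 1
      rw [← Complex.ofReal_mul, Complex.ofReal_inj, ← pow_add]
      ring_nf
  -- E00 in the closure
  have hq2 : q ^ 2 < 1 := hqpow 2 (by omega)
  have hbound : ∀ k : ℕ, ‖S ^ (k + 1) - unit 0 0‖ ≤ (q ^ 2) ^ (k + 1) := by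
    intro k
    refine diag_norm_le _
      (fun n => ((q ^ (2 * n * (k + 1)) : ℝ) : ℂ) - (if n = 0 then 1 else 0)) ?_
      (by positivity) ?_
    · intro n
      rw [ContinuousLinearMap.sub_apply, hSpow (k + 1) n, unit_fock, sub_smul]
      rcases eq_or_ne n 0 with h | h
      · subst h; simp
      · simp [h]
    · intro n
      rcases eq_or_ne n 0 with h | h
      · subst h; simp; positivity
      · obtain ⟨m, rfl⟩ := Nat.exists_eq_succ_of_ne_zero h
        rw [if_neg (Nat.succ_ne_zero m), sub_zero, Complex.norm_real, Real.norm_eq_abs,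
          abs_of_nonneg (by positivity), ← pow_mul]
        refine pow_le_pow_of_le_one hq0.le hq1.le ?_
        show 2 * (k + 1) ≤ 2 * (m + 1) * (k + 1)
        have h6 : 2 ≤ 2 * (m + 1) := by omega
        exact Nat.mul_le_mul_right (k + 1) h6
  have htend0 : Tendsto (fun k : ℕ => ((q ^ 2) ^ (k + 1) : ℝ)) atTop (nhds 0) :=
    (tendsto_pow_atTop_nhds_zero_of_lt_one (by positivity) hq2).comp (tendsto_add_atTop_nat 1)
  have hpow_mem : ∀ k : ℕ, S ^ (k + 1) ∈ Ab := by
    intro k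
    induction k with
    | zero => simpa using hS_mem
    | succ k ih => rw [pow_succ]; exact mul_mem ih hS_mem
  have hE00 : unit 0 0 ∈ Ab := by
    refine hlim (fun k => S ^ (k + 1)) _ hpow_mem ?_
    refine tendsto_iff_norm_sub_tendsto_zero.2 ?_
    exact squeeze_zero (fun k => norm_nonneg _) hbound htend0
  -- matrix units in the closure
  set g : ℕ → ℝ := fun m => ∏ i ∈ Finset.range m, c i with hg
  have hg_pos : ∀ m, 0 < g m := fun m => Finset.prod_pos fun i _ => hc_pos i
  have hTn : ∀ m, (T ^ m) (fockBasis 0) = ((g m : ℝ) : ℂ) • fockBasis m := by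
    intro m
    induction m with
    | zero => simp [hg]
    | succ m ih =>
      rw [pow_succ', ContinuousLinearMap.mul_apply, ih, map_smul, hT' m, smul_smul]
      congr 1
      rw [← Complex.ofReal_mul, Complex.ofReal_inj]
      exact (Finset.prod_range_succ c m).symm
  have hTin : ∀ n (x : H), ⟪fockBasis 0, (Tc ^ n) x⟫ = ((g n : ℝ) : ℂ) * ⟪fockBasis n, x⟫ := by
    intro n
    induction n with
    | zero => intro x; simp [hg]
    | succ n ih =>
      intro x
      rw [pow_succ, ContinuousLinearMap.mul_apply, ih (Tc x)]
      have h1 : ⟪fockBasis n, Tc x⟫ = ⟪T (fockBasis n), x⟫ :=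
        ContinuousLinearMap.adjoint_inner_right T (fockBasis n) x
      rw [h1, hT' n, inner_smul_left, Complex.conj_ofReal, ← mul_assoc]
      congr 1
      rw [← Complex.ofReal_mul, Complex.ofReal_inj]
      exact (Finset.prod_range_succ c n).symm
  have hkey : ∀ m n, T ^ m * unit 0 0 * Tc ^ n = ((g m * g n : ℝ) : ℂ) • unit m n := by
    intro m n
    refine ContinuousLinearMap.ext fun x => ?_
    simp only [ContinuousLinearMap.mul_apply, ContinuousLinearMap.smul_apply]
    rw [unit_apply, map_smul, hTn m, hTin n x, unit_apply, smul_smul, smul_smul]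
    congr 1
    push_cast
    ring
  have hmulL : ∀ (m : ℕ) (x : H →L[ℂ] H), x ∈ Ab → T ^ m * x ∈ Ab := by
    intro m
    induction m with
    | zero => intro x hx; simpa using hx
    | succ m ih =>
      intro x hx
      rw [pow_succ', mul_assoc]
      exact mul_mem hT_mem (ih x hx)
  have hmulR : ∀ (n : ℕ) (x : H →L[ℂ] H), x ∈ Ab → x * Tc ^ n ∈ Ab := by
    intro n
    induction n with
    | zero => intro x hx; simpa using hx
    | succ n ih =>
      intro x hx
      rw [pow_succ, ← mul_assoc]
      exact mul_mem (ih x hx) hTc_mem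
  have hunit : ∀ m n, unit m n ∈ Ab := by
    intro m n
    have heq : unit m n = (((g m * g n : ℝ))⁻¹ : ℂ) • (T ^ m * unit 0 0 * Tc ^ n) := by
      rw [hkey, smul_smul, ← Complex.ofReal_inv, ← Complex.ofReal_mul,
        inv_mul_cancel₀ (mul_pos (hg_pos m) (hg_pos n)).ne', Complex.ofReal_one, one_smul]
    rw [heq]
    exact SMulMemClass.smul_mem _ (hmulR n _ (hmulL m _ hE00))
  -- columns in the closure
  have hcol : ∀ m, unit m m * K ∈ Ab := by
    intro m
    set w := ContinuousLinearMap.adjoint K (fockBasis m) with hw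
    refine hlim (fun N => (unit m m * K) * QN N) _ (fun N => ?_) ?_
    · have heq : (unit m m * K) * QN N
          = ∑ n ∈ Finset.range N, ⟪fockBasis m, K (fockBasis n)⟫ • unit m n := by
        rw [QN, Finset.mul_sum]
        exact Finset.sum_congr rfl fun n _ => unit_K_unit K m n
      rw [heq]
      exact sum_mem fun n _ => SMulMemClass.smul_mem _ (hunit m n)
    · have hb : ∀ N, ‖unit m m * K - (unit m m * K) * QN N‖ ≤ ‖w - QN N w‖ :=
        fun N => col_tail_norm K m N
      have h2 : Tendsto (fun N => ‖w - QN N w‖) atTop (nhds 0) := by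
        have h3 := QN_tendsto w
        have := (tendsto_const_nhds (x := w) (f := atTop)).sub h3
        simpa using this.norm
      refine tendsto_iff_norm_sub_tendsto_zero.2 ?_
      have := squeeze_zero (fun N => norm_nonneg _) hb h2
      refine this.congr fun N => ?_
      rw [norm_sub_rev]
  -- rows: compactness
  rw [← SetLike.mem_coe, ← hclosed, Metric.mem_closure_iff]
  intro ε hε
  have hδ0 : 0 < ε / 4 := by positivity
  have hKc : IsCompact (closure (⇑K '' Metric.closedBall 0 1)) := by
    have h9 := IsCompactOperator.isCompact_closure_image_closedBall (𝕜₁ := ℂ)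
      (f := (K : H →ₗ[ℂ] H)) (by exact hK) 1
    simpa using h9
  obtain ⟨t, htf, htc⟩ := (Metric.totallyBounded_iff.1 hKc.totallyBounded) (ε / 4) hδ0
  have hev : ∀ᶠ N in atTop, ∀ y ∈ t, ‖y - QN N y‖ < ε / 4 := by
    rw [Filter.eventually_all_finite htf]
    intro y _
    have h3 := QN_tendsto y
    have h2 : Tendsto (fun N => ‖y - QN N y‖) atTop (nhds 0) := by
      have := (tendsto_const_nhds (x := y) (f := atTop)).sub h3
      simpa using this.norm
    exact h2.eventually (gt_mem_nhds hδ0)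
  obtain ⟨N, hN⟩ := hev.exists
  refine ⟨QN N * K, ?_, ?_⟩
  · have heq : QN N * K = ∑ m ∈ Finset.range N, unit m m * K := by
      rw [QN, Finset.sum_mul]
    rw [SetLike.mem_coe, heq]
    exact sum_mem fun m _ => hcol m
  · rw [dist_eq_norm]
    have hub : ∀ x : H, ‖x‖ ≤ 1 → ‖K x - QN N (K x)‖ ≤ 3 * (ε / 4) := by
      intro x hx
      have h1 : K x ∈ closure (⇑K '' Metric.closedBall 0 1) :=
        subset_closure ⟨x, by rwa [Metric.mem_closedBall, dist_zero_right], rfl⟩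
      obtain ⟨y, hyt, hy⟩ := Set.mem_iUnion₂.1 (htc h1)
      have h2 : ‖K x - y‖ < ε / 4 := by rwa [Metric.mem_ball, dist_eq_norm] at hy
      have h3 : ‖QN N (K x - y)‖ ≤ ‖K x - y‖ := by
        calc ‖QN N (K x - y)‖ ≤ ‖QN N‖ * ‖K x - y‖ := le_opNorm _ _
          _ ≤ 1 * ‖K x - y‖ := mul_le_mul_of_nonneg_right (QN_norm N) (norm_nonneg _)
          _ = ‖K x - y‖ := one_mul _
      have h4 : ‖y - QN N y‖ < ε / 4 := hN y hyt
      have key : K x - QN N (K x) = ((K x - y) - QN N (K x - y)) + (y - QN N y) := by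
        rw [map_sub]; abel
      rw [key]
      calc ‖((K x - y) - QN N (K x - y)) + (y - QN N y)‖
          ≤ ‖(K x - y) - QN N (K x - y)‖ + ‖y - QN N y‖ := norm_add_le _ _
        _ ≤ (‖K x - y‖ + ‖QN N (K x - y)‖) + ‖y - QN N y‖ := by
            gcongr; exact norm_sub_le _ _
        _ ≤ 3 * (ε / 4) := by linarith
    have hop : ‖K - QN N * K‖ ≤ 3 * (ε / 4) := by
      refine ContinuousLinearMap.opNorm_le_bound _ (by positivity) fun x => ?_
      rcases eq_or_ne x 0 with rfl | hx0
      · simp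
      · have hn : 0 < ‖x‖ := norm_pos_iff.2 hx0
        have hu1 : ‖((‖x‖ : ℝ) : ℂ)⁻¹ • x‖ ≤ 1 := by
          rw [norm_smul, norm_inv, Complex.norm_real, Real.norm_eq_abs,
            abs_of_nonneg hn.le, inv_mul_cancel₀ hn.ne']
        have heq2 : (K - QN N * K) x
            = ((‖x‖ : ℝ) : ℂ) • ((K - QN N * K) (((‖x‖ : ℝ) : ℂ)⁻¹ • x)) := by
          rw [map_smul, smul_smul, mul_inv_cancel₀ (by
            simpa using hn.ne' : ((‖x‖ : ℝ) : ℂ) ≠ 0), one_smul]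
        rw [heq2, norm_smul, Complex.norm_real, Real.norm_eq_abs, abs_of_nonneg hn.le]
        have := hub (((‖x‖ : ℝ) : ℂ)⁻¹ • x) hu1
        have heq3 : (K - QN N * K) (((‖x‖ : ℝ) : ℂ)⁻¹ • x)
            = K (((‖x‖ : ℝ) : ℂ)⁻¹ • x) - QN N (K (((‖x‖ : ℝ) : ℂ)⁻¹ • x)) := by
          rw [ContinuousLinearMap.sub_apply, ContinuousLinearMap.mul_apply]
        rw [heq3]
        calc ‖x‖ * ‖K (((‖x‖ : ℝ) : ℂ)⁻¹ • x) - QN N (K (((‖x‖ : ℝ) : ℂ)⁻¹ • x))‖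
            ≤ ‖x‖ * (3 * (ε / 4)) := mul_le_mul_of_nonneg_left this hn.le
          _ = 3 * (ε / 4) * ‖x‖ := by ring
    calc ‖K - QN N * K‖ ≤ 3 * (ε / 4) := hop
      _ < ε := by linarith
end
end

section
/- The Fock representation of the quantum disc algebra is faithful: the unique unital ℂ-algebra homomorphism from Pol(ℂ)_q to the algebra of bounded operators on ℓ²(ℕ, ℂ) sending z to T and w to T* (which exists because T*T = q² T T* + (1 − q²)·I) is injective. -/
noncomputable section

/-- The defining relation of the quantum disc algebra: `w z = q² z w + (1 − q²)·1`,
where `true` encodes the generator `z` and `false` the generator `w`. -/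
inductive DiscRel (q : ℝ) : FreeAlgebra ℂ Bool → FreeAlgebra ℂ Bool → Prop
  | rel : DiscRel q (FreeAlgebra.ι ℂ false * FreeAlgebra.ι ℂ true)
      (((q : ℂ) ^ 2) • (FreeAlgebra.ι ℂ true * FreeAlgebra.ι ℂ false) +
        ((1 : ℂ) - (q : ℂ) ^ 2) • (1 : FreeAlgebra ℂ Bool))

/-- The quantum disc algebra `Pol(ℂ)_q`. -/
abbrev PolDisc (q : ℝ) := RingQuot (DiscRel q)

/-- The generator `z` of the quantum disc algebra. -/
def zGen (q : ℝ) : PolDisc q := RingQuot.mkAlgHom ℂ (DiscRel q) (FreeAlgebra.ι ℂ true)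

/-- The generator `w = z*` of the quantum disc algebra. -/
def wGen (q : ℝ) : PolDisc q := RingQuot.mkAlgHom ℂ (DiscRel q) (FreeAlgebra.ι ℂ false)

open scoped ComplexConjugate InnerProductSpace

abbrev Hsp := lp (fun _ : ℕ => ℂ) 2

lemma fock_coord (f : Hsp) (n : ℕ) : (⟪fockBasis n, f⟫_ℂ) = f n := by
  rw [fockBasis, lp.inner_single_left]; simp [RCLike.inner_apply]

lemma fock_inner (m n : ℕ) : (⟪fockBasis m, fockBasis n⟫_ℂ) = if m = n then 1 else 0 := by
  rw [fock_coord, fockBasis, lp.single_apply]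
  split_ifs with h <;> simp [Pi.single_apply, h]

lemma fock_ext {f g : Hsp} (h : ∀ n, (⟪fockBasis n, f⟫_ℂ) = ⟪fockBasis n, g⟫_ℂ) : f = g := by
  apply lp.ext; funext n
  simpa [fock_coord] using h n

variable {q : ℝ} {T : Hsp →L[ℂ] Hsp}

lemma adj_succ (hT : ∀ n : ℕ, T (fockBasis n) =
      (Real.sqrt (1 - q ^ (2 * (n + 1))) : ℂ) • fockBasis (n + 1)) (m : ℕ) :
    (ContinuousLinearMap.adjoint T) (fockBasis (m+1)) =
      (Real.sqrt (1 - q ^ (2 * (m + 1))) : ℂ) • fockBasis m := by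
  apply fock_ext; intro n
  rw [ContinuousLinearMap.adjoint_inner_right, hT n, inner_smul_left, inner_smul_right,
    fock_inner, fock_inner]
  by_cases h : n = m
  · subst h; simp
  · simp [h, fun hh => h (Nat.succ_injective hh)]

lemma adj_zero (hT : ∀ n : ℕ, T (fockBasis n) =
      (Real.sqrt (1 - q ^ (2 * (n + 1))) : ℂ) • fockBasis (n + 1)) :
    (ContinuousLinearMap.adjoint T) (fockBasis 0) = 0 := by
  apply fock_ext; intro n
  rw [ContinuousLinearMap.adjoint_inner_right, hT n, inner_smul_left, fock_inner]
  simp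

def cc (q : ℝ) (n : ℕ) : ℝ := Real.sqrt (1 - q ^ (2 * (n + 1)))

lemma cc_pos (hq0 : 0 < q) (hq1 : q < 1) (n : ℕ) : 0 < cc q n := by
  apply Real.sqrt_pos.mpr
  have : q ^ (2 * (n + 1)) < 1 := pow_lt_one₀ hq0.le hq1 (by omega)
  linarith

def Pk (q : ℝ) (k n : ℕ) : ℝ := ∏ i ∈ Finset.range k, cc q (n + i)
def Ql (q : ℝ) (l n : ℕ) : ℝ := ∏ i ∈ Finset.range l, cc q (n - 1 - i)

lemma Pk_pos (hq0 : 0 < q) (hq1 : q < 1) (k n : ℕ) : 0 < Pk q k n :=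
  Finset.prod_pos fun i _ => cc_pos hq0 hq1 _

lemma Ql_pos (hq0 : 0 < q) (hq1 : q < 1) (l n : ℕ) : 0 < Ql q l n :=
  Finset.prod_pos fun i _ => cc_pos hq0 hq1 _

lemma Tpow (hT : ∀ n : ℕ, T (fockBasis n) = ((cc q n : ℝ) : ℂ) • fockBasis (n + 1))
    (k n : ℕ) : (T ^ k) (fockBasis n) = ((Pk q k n : ℝ) : ℂ) • fockBasis (n + k) := by
  induction k generalizing n with
  | zero => simp [Pk]
  | succ k ih =>
    rw [pow_succ', ContinuousLinearMap.mul_apply, ih n, map_smul, hT (n+k)]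
    have h1 : Pk q (k+1) n = Pk q k n * cc q (n+k) := Finset.prod_range_succ _ _
    have h2 : n + k + 1 = n + (k + 1) := by omega
    rw [h1, h2, smul_smul]
    push_cast
    ring_nf

lemma Spow_gt (hA : (ContinuousLinearMap.adjoint T) (fockBasis 0) = 0)
    (hA' : ∀ m : ℕ, (ContinuousLinearMap.adjoint T) (fockBasis (m+1)) = ((cc q m : ℝ) : ℂ) • fockBasis m) :
    ∀ l n : ℕ, n < l → ((ContinuousLinearMap.adjoint T) ^ l) (fockBasis n) = 0 := by
  intro l
  induction l with
  | zero => omega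
  | succ l ih =>
    intro n hn
    rw [pow_succ, ContinuousLinearMap.mul_apply]
    cases n with
    | zero => rw [hA, map_zero]
    | succ m => rw [hA' m, map_smul, ih m (by omega), smul_zero]

lemma Spow_le (hA' : ∀ m : ℕ, (ContinuousLinearMap.adjoint T) (fockBasis (m+1)) = ((cc q m : ℝ) : ℂ) • fockBasis m) :
    ∀ l n : ℕ, l ≤ n → ((ContinuousLinearMap.adjoint T) ^ l) (fockBasis n) = ((Ql q l n : ℝ) : ℂ) • fockBasis (n - l) := by
  intro l
  induction l with
  | zero => intro n _; simp [Ql]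
  | succ l ih =>
    intro n hn
    obtain ⟨m, rfl⟩ : ∃ m, n = m + 1 := ⟨n - 1, by omega⟩
    rw [pow_succ, ContinuousLinearMap.mul_apply, hA' m, map_smul, ih m (by omega), smul_smul]
    have h1 : Ql q (l+1) (m+1) = Ql q l m * cc q m := by
      rw [Ql, Finset.prod_range_succ']
      congr 1
      exact Finset.prod_congr rfl fun i _ => by congr 1; omega
    have h2 : m - l = m + 1 - (l + 1) := by omega
    rw [h1, h2]
    push_cast
    rw [mul_comm]


lemma indep (hq0 : 0 < q) (hq1 : q < 1)
    (hT : ∀ n : ℕ, T (fockBasis n) = ((cc q n : ℝ) : ℂ) • fockBasis (n + 1))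
    (s : Finset (ℕ × ℕ)) (a : ℕ × ℕ → ℂ)
    (h : ∑ p ∈ s, a p • (T ^ p.1 * (ContinuousLinearMap.adjoint T) ^ p.2) = 0) :
    ∀ p ∈ s, a p = 0 := by
  have hA0 : (ContinuousLinearMap.adjoint T) (fockBasis 0) = 0 := adj_zero hT
  have hA' : ∀ m : ℕ, (ContinuousLinearMap.adjoint T) (fockBasis (m+1)) =
      ((cc q m : ℝ) : ℂ) • fockBasis m := adj_succ hT
  have key : ∀ l k : ℕ, (k, l) ∈ s → a (k, l) = 0 := by
    intro l
    induction l using Nat.strong_induction_on with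
    | _ l ih =>
      intro k hkl
      have h0 : ∑ p ∈ s, a p *
          (⟪fockBasis k, (T ^ p.1) (((ContinuousLinearMap.adjoint T) ^ p.2) (fockBasis l))⟫_ℂ)
          = 0 := by
        have := congrArg (fun B : Hsp →L[ℂ] Hsp => (⟪fockBasis k, B (fockBasis l)⟫_ℂ)) h
        simp only [ContinuousLinearMap.sum_apply, ContinuousLinearMap.smul_apply,
          ContinuousLinearMap.mul_apply, inner_sum, inner_smul_right,
          ContinuousLinearMap.zero_apply, inner_zero_right] at this
        simpa using this
      rw [Finset.sum_eq_single_of_mem (k, l) hkl] at h0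
      · have hval : (⟪fockBasis k, (T ^ k) (((ContinuousLinearMap.adjoint T) ^ l) (fockBasis l))⟫_ℂ)
            = ((Ql q l l * Pk q k 0 : ℝ) : ℂ) := by
          rw [Spow_le hA' l l le_rfl, map_smul, Tpow hT, inner_smul_right, inner_smul_right,
            Nat.sub_self, Nat.zero_add, fock_inner, if_pos rfl]
          push_cast
          ring
        rw [hval] at h0
        have hne : ((Ql q l l * Pk q k 0 : ℝ) : ℂ) ≠ 0 := by
          simp only [ne_eq, Complex.ofReal_eq_zero]
          exact ne_of_gt (mul_pos (Ql_pos hq0 hq1 _ _) (Pk_pos hq0 hq1 _ _))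
        exact (mul_eq_zero.mp h0).resolve_right hne
      · rintro ⟨k', l'⟩ hp hne
        rcases lt_trichotomy l' l with hl | hl | hl
        · exact mul_eq_zero_of_left (ih l' hl k' hp) _
        · subst hl
          have hk' : k' ≠ k := fun hh => hne (by rw [hh])
          rw [Spow_le hA' l' l' le_rfl, map_smul, Tpow hT, inner_smul_right, inner_smul_right,
            Nat.sub_self, Nat.zero_add, fock_inner, if_neg (Ne.symm hk')]
          simp
        · rw [Spow_gt hA0 hA' l' l hl, map_zero, inner_zero_right, mul_zero]
  intro p hp
  exact key p.2 p.1 (by simpa using hp)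


/-! ### Spanning of the quantum disc algebra by monomials -/

def Mgen (q : ℝ) (p : ℕ × ℕ) : PolDisc q := zGen q ^ p.1 * wGen q ^ p.2

lemma disc_relation (q : ℝ) : wGen q * zGen q =
    ((q : ℂ) ^ 2) • (zGen q * wGen q) + ((1 : ℂ) - (q : ℂ) ^ 2) • (1 : PolDisc q) := by
  have := RingQuot.mkAlgHom_rel ℂ (DiscRel.rel (q := q))
  simpa only [map_mul, map_add, map_smul, map_one, zGen, wGen] using this

abbrev Sspan (q : ℝ) : Submodule ℂ (PolDisc q) := Submodule.span ℂ (Set.range (Mgen q))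

lemma Mgen_mem (q : ℝ) (p : ℕ × ℕ) : Mgen q p ∈ Sspan q :=
  Submodule.subset_span ⟨p, rfl⟩

lemma z_mul_Mgen (q : ℝ) (k l : ℕ) : zGen q * Mgen q (k, l) = Mgen q (k + 1, l) := by
  rw [Mgen, Mgen]
  simp only [pow_succ']
  rw [mul_assoc]

lemma z_mul_mem (q : ℝ) {x : PolDisc q} (hx : x ∈ Sspan q) : zGen q * x ∈ Sspan q := by
  induction hx using Submodule.span_induction with
  | mem x hx =>
    obtain ⟨⟨k, l⟩, rfl⟩ := hx
    rw [z_mul_Mgen]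
    exact Mgen_mem q _
  | zero => simp
  | add x y _ _ hx hy => rw [mul_add]; exact add_mem hx hy
  | smul c x _ hx => rw [mul_smul_comm]; exact Submodule.smul_mem _ _ hx

lemma w_mul_Mgen (q : ℝ) (k l : ℕ) : wGen q * Mgen q (k, l) ∈ Sspan q := by
  induction k with
  | zero =>
    have : wGen q * Mgen q (0, l) = Mgen q (0, l + 1) := by
      rw [Mgen, Mgen]
      simp only [pow_zero, one_mul, pow_succ']
    rw [this]; exact Mgen_mem q _
  | succ k ih =>
    rw [← z_mul_Mgen, ← mul_assoc, disc_relation, add_mul, smul_mul_assoc, smul_mul_assoc,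
      one_mul, mul_assoc]
    exact add_mem (Submodule.smul_mem _ _ (z_mul_mem q ih))
      (Submodule.smul_mem _ _ (Mgen_mem q _))

lemma w_mul_mem (q : ℝ) {x : PolDisc q} (hx : x ∈ Sspan q) : wGen q * x ∈ Sspan q := by
  induction hx using Submodule.span_induction with
  | mem x hx => obtain ⟨⟨k, l⟩, rfl⟩ := hx; exact w_mul_Mgen q k l
  | zero => simp
  | add x y _ _ hx hy => rw [mul_add]; exact add_mem hx hy
  | smul c x _ hx => rw [mul_smul_comm]; exact Submodule.smul_mem _ _ hx

lemma zpow_mul_mem (q : ℝ) (k : ℕ) {x : PolDisc q} (hx : x ∈ Sspan q) :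
    zGen q ^ k * x ∈ Sspan q := by
  induction k with
  | zero => simpa using hx
  | succ k ih => rw [pow_succ', mul_assoc]; exact z_mul_mem q ih

lemma wpow_mul_mem (q : ℝ) (l : ℕ) {x : PolDisc q} (hx : x ∈ Sspan q) :
    wGen q ^ l * x ∈ Sspan q := by
  induction l with
  | zero => simpa using hx
  | succ l ih => rw [pow_succ', mul_assoc]; exact w_mul_mem q ih

lemma mul_mem_span (q : ℝ) {x y : PolDisc q} (hx : x ∈ Sspan q) (hy : y ∈ Sspan q) :
    x * y ∈ Sspan q := by
  induction hx using Submodule.span_induction with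
  | mem x hx =>
    obtain ⟨⟨k, l⟩, rfl⟩ := hx
    rw [Mgen, mul_assoc]
    exact zpow_mul_mem q k (wpow_mul_mem q l hy)
  | zero => simp
  | add a b _ _ ha hb => rw [add_mul]; exact add_mem ha hb
  | smul c a _ ha => rw [smul_mul_assoc]; exact Submodule.smul_mem _ _ ha

lemma mem_span_top (q : ℝ) (x : PolDisc q) : x ∈ Sspan q := by
  obtain ⟨y, rfl⟩ := RingQuot.mkAlgHom_surjective ℂ (DiscRel q) x
  induction y using FreeAlgebra.induction with
  | grade0 r =>
    rw [AlgHom.commutes, Algebra.algebraMap_eq_smul_one]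
    have h1 : (1 : PolDisc q) = Mgen q (0, 0) := by simp [Mgen]
    rw [h1]
    exact Submodule.smul_mem _ _ (Mgen_mem q _)
  | grade1 b =>
    cases b
    · have : RingQuot.mkAlgHom ℂ (DiscRel q) (FreeAlgebra.ι ℂ false) = Mgen q (0, 1) := by
        simp [Mgen, wGen]
      rw [this]; exact Mgen_mem q _
    · have : RingQuot.mkAlgHom ℂ (DiscRel q) (FreeAlgebra.ι ℂ true) = Mgen q (1, 0) := by
        simp [Mgen, zGen]
      rw [this]; exact Mgen_mem q _
  | mul a b ha hb => rw [map_mul]; exact mul_mem_span q ha hb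
  | add a b ha hb => rw [map_add]; exact add_mem ha hb

/-- The Fock representation of the quantum disc algebra, i.e. the unital algebra
homomorphism sending `z` to `T` and `w` to `T*`, is faithful. -/
theorem fock_representation_faithful (q : ℝ) (hq0 : 0 < q) (hq1 : q < 1)
    (T : lp (fun _ : ℕ => ℂ) 2 →L[ℂ] lp (fun _ : ℕ => ℂ) 2)
    (hT : ∀ n : ℕ, T (fockBasis n) =
      (Real.sqrt (1 - q ^ (2 * (n + 1))) : ℂ) • fockBasis (n + 1))
    (φ : PolDisc q →ₐ[ℂ] (lp (fun _ : ℕ => ℂ) 2 →L[ℂ] lp (fun _ : ℕ => ℂ) 2))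
    (hz : φ (zGen q) = T)
    (hw : φ (wGen q) = ContinuousLinearMap.adjoint T) :
    Function.Injective φ := by
  rw [injective_iff_map_eq_zero]
  intro x hx
  obtain ⟨c, rfl⟩ := Finsupp.mem_span_range_iff_exists_finsupp.mp (mem_span_top q x)
  have hT' : ∀ n : ℕ, T (fockBasis n) = ((cc q n : ℝ) : ℂ) • fockBasis (n + 1) :=
    fun n => hT n
  have hsum : ∑ p ∈ c.support, c p • (T ^ p.1 * (ContinuousLinearMap.adjoint T) ^ p.2) = 0 := by
    have hphi : φ (c.sum fun p r => r • Mgen q p) =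
        ∑ p ∈ c.support, c p • (T ^ p.1 * (ContinuousLinearMap.adjoint T) ^ p.2) := by
      rw [Finsupp.sum, map_sum]
      refine Finset.sum_congr rfl fun p _ => ?_
      rw [map_smul, Mgen, map_mul, map_pow, map_pow, hz, hw]
    rw [← hphi, hx]
  have hc := indep hq0 hq1 hT' c.support (fun p => c p) hsum
  rw [Finsupp.sum]
  exact Finset.sum_eq_zero fun p hp => by rw [show c p = 0 from hc p hp, zero_smul]
end
end
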